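/- For every ω ∈ Ω and every t ∈ [0,T] such that s ↦ R(O_{⌊s⌋}(ω)) is Lebesgue integrable on [0,t], it holds that ‖F(Y_t(ω) + O_t(ω))‖_W ≤ C·( 1 + 2^{max{q−1,0}}·e^{cqt}·( (U(Y_0(ω)))^q + (∫_0^t R(O_{⌊s⌋}(ω)) ds)^q ) + (U(O_t(ω)))^q ). (Lemma 2.2 of the paper.) -/

import Mathlib

open MeasureTheory Set

/-- `⌊t⌋_h = max({0, h, −h, 2h, −2h, …} ∩ (−∞, t])` for `h > 0`. -/
noncomputable def hfloor (h t : ℝ) : ℝ := h * (⌊t / h⌋ : ℝ)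

lemma hfloor_nonneg {h s : ℝ} (hh : 0 < h) (hs : 0 ≤ s) : 0 ≤ hfloor h s :=
  mul_nonneg hh.le (by exact_mod_cast Int.floor_nonneg.mpr (div_nonneg hs hh.le))

lemma hfloor_le {h : ℝ} (hh : 0 < h) (s : ℝ) : hfloor h s ≤ s := by
  have h1 : (⌊s / h⌋ : ℝ) ≤ s / h := Int.floor_le _
  have := mul_le_mul_of_nonneg_left h1 hh.le
  calc hfloor h s ≤ h * (s / h) := this
    _ = s := by field_simp

lemma hfloor_eq {h : ℝ} (hh : 0 < h) (k : ℕ) {s : ℝ}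
    (h1 : (k : ℝ) * h ≤ s) (h2 : s < ((k : ℝ) + 1) * h) : hfloor h s = (k : ℝ) * h := by
  unfold hfloor
  have hfl : ⌊s / h⌋ = (k : ℤ) := by
    rw [Int.floor_eq_iff]
    constructor
    · rw [le_div_iff₀ hh]; exact_mod_cast h1
    · rw [div_lt_iff₀ hh]; push_cast; linarith
  rw [hfl]; push_cast; ring

lemma integral_step {E : Type*} [NormedAddCommGroup E] [NormedSpace ℝ E] [CompleteSpace E]
    (f : ℝ → E) (a b : ℝ) (hab : a ≤ b) (v : E) (hf : ∀ s ∈ Ioo a b, f s = v) :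
    ∫ s in Ioc a b, f s = (b - a) • v := by
  rw [integral_Ioc_eq_integral_Ioo, setIntegral_congr_fun measurableSet_Ioo hf,
    setIntegral_const]
  congr 1
  rw [Real.volume_real_Ioo_of_le hab]

lemma integral_map_congr {E F : Type*} [NormedAddCommGroup E] [NormedSpace ℝ E] [CompleteSpace E]
    [NormedAddCommGroup F] [NormedSpace ℝ F] [CompleteSpace F]
    (L : E →L[ℝ] F) (f : ℝ → E) (g : ℝ → F) (a b : ℝ)
    (hf : IntegrableOn f (Ioc a b)) (h : ∀ s ∈ Ioo a b, g s = L (f s)) :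
    ∫ s in Ioc a b, g s = L (∫ s in Ioc a b, f s) := by
  rw [integral_Ioc_eq_integral_Ioo, setIntegral_congr_fun measurableSet_Ioo h,
    ContinuousLinearMap.integral_comp_comm _ (hf.mono_set Ioo_subset_Ioc_self),
    ← integral_Ioc_eq_integral_Ioo]

lemma integral_split {E : Type*} [NormedAddCommGroup E] [NormedSpace ℝ E] [CompleteSpace E]
    (f : ℝ → E) (a b c : ℝ) (h1 : a ≤ b) (h2 : b ≤ c) (hf : IntegrableOn f (Ioc a c)) :
    ∫ s in Ioc a c, f s = (∫ s in Ioc a b, f s) + ∫ s in Ioc b c, f s := by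
  rw [← Ioc_union_Ioc_eq_Ioc h1 h2,
    setIntegral_union (Ioc_disjoint_Ioc_of_le le_rfl) measurableSet_Ioc
      (hf.mono_set (by rw [← Ioc_union_Ioc_eq_Ioc h1 h2]; exact subset_union_left))
      (hf.mono_set (by rw [← Ioc_union_Ioc_eq_Ioc h1 h2]; exact subset_union_right))]

lemma two_rpow_bound {q : ℝ} (hq : 0 < q) {a b : ℝ} (ha : 0 ≤ a) (hb : 0 ≤ b) :
    (a + b) ^ q ≤ 2 ^ max (q - 1) 0 * (a ^ q + b ^ q) := by
  lift a to NNReal using ha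
  lift b to NNReal using hb
  rcases le_total q 1 with h1 | h1
  · rw [max_eq_right (by linarith), Real.rpow_zero, one_mul]
    exact_mod_cast NNReal.rpow_add_le_add_rpow a b hq.le h1
  · rw [max_eq_left (by linarith)]
    exact_mod_cast NNReal.rpow_add_le_mul_rpow_add_rpow a b h1

theorem stmt1
    (T q c C : ℝ) (hT : 0 < T) (hq : 0 < q) (hc : 0 ≤ c) (hC : 0 ≤ C)
    (M : ℕ) (hM : 0 < M)
    {V W : Type*}
    [NormedAddCommGroup V] [NormedSpace ℝ V] [CompleteSpace V]
    [TopologicalSpace.SeparableSpace V] [MeasurableSpace V] [BorelSpace V]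
    [NormedAddCommGroup W] [NormedSpace ℝ W] [CompleteSpace W]
    [TopologicalSpace.SeparableSpace W] [MeasurableSpace W] [BorelSpace W]
    (ι : V →L[ℝ] W) (hι_inj : Function.Injective ι) (hι_dense : DenseRange ι)
    (U R Vm : V → ℝ)
    (hU0 : ∀ v, 0 ≤ U v) (hR0 : ∀ v, 0 ≤ R v) (hVm0 : ∀ v, 0 ≤ Vm v)
    (hUm : Measurable U) (hRm : Measurable R) (hVmm : Measurable Vm)
    (F : V → W) (hFm : Measurable F)
    (S : ℝ → ℝ → (W →L[ℝ] V))
    (hSm : ∀ w : W, Measurable fun p : ℝ × ℝ => S p.1 p.2 w)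
    (hFgrowth : ∀ u v : V, ‖F (u + v)‖ ≤ C * (1 + U u ^ q + U v ^ q))
    (hSsemi : ∀ r1 r2 r3 : ℝ, 0 ≤ r1 → r1 < r2 → r2 < r3 → r3 ≤ T →
      S r1 r3 = (S r2 r3).comp (ι.comp (S r1 r2)))
    (hLyap : ∀ u v : V, ∀ k : ℕ, k < M → ∀ t : ℝ,
      (k : ℝ) * T / M < t → t ≤ ((k : ℝ) + 1) * T / M →
      U (S ((k : ℝ) * T / M) t
          (ι u + (t - (k : ℝ) * T / M) •
            (if Vm (u + v) ≤ (M : ℝ) / T then F (u + v) else 0)))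
        ≤ Real.exp (c * (t - (k : ℝ) * T / M)) * (U u + (t - (k : ℝ) * T / M) * R v))
    {Ω : Type*} [MeasurableSpace Ω] (P : Measure Ω) [IsProbabilityMeasure P]
    (O Y : ℝ → Ω → V)
    (hYint : ∀ ω : Ω, ∀ t : ℝ, 0 < t → t ≤ T →
      IntegrableOn
        (fun s => S (hfloor (T / M) s) t
          (if Vm (Y (hfloor (T / M) s) ω + O (hfloor (T / M) s) ω) ≤ (M : ℝ) / T
            then F (Y (hfloor (T / M) s) ω + O (hfloor (T / M) s) ω) else 0))
        (Set.Ioc 0 t))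
    (hYeq : ∀ ω : Ω, ∀ t : ℝ, 0 < t → t ≤ T →
      Y t ω = S 0 t (ι (Y 0 ω)) +
        ∫ s in Set.Ioc (0 : ℝ) t, S (hfloor (T / M) s) t
          (if Vm (Y (hfloor (T / M) s) ω + O (hfloor (T / M) s) ω) ≤ (M : ℝ) / T
            then F (Y (hfloor (T / M) s) ω + O (hfloor (T / M) s) ω) else 0)) :
    ∀ ω : Ω, ∀ t ∈ Set.Icc (0 : ℝ) T,
      IntegrableOn (fun s => R (O (hfloor (T / M) s) ω)) (Set.Ioc 0 t) →
      ‖F (Y t ω + O t ω)‖ ≤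
        C * (1 + 2 ^ max (q - 1) 0 * Real.exp (c * q * t) *
              (U (Y 0 ω) ^ q +
                (∫ s in Set.Ioc (0 : ℝ) t, R (O (hfloor (T / M) s) ω)) ^ q) +
            U (O t ω) ^ q) := by
  intro ω t ht hRint
  obtain ⟨ht0, htT⟩ := ht
  have hM0 : (0 : ℝ) < (M : ℝ) := by exact_mod_cast hM
  have hδ : (0 : ℝ) < T / M := div_pos hT hM0
  have hMδ : (M : ℝ) * (T / M) = T := by field_simp
  -- abbreviations
  set δ : ℝ := T / M with hδdef
  -- the tamed nonlinearity as a function of the grid point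
  have hG : ∀ r : ℝ, ∃ g : W,
      g = (if Vm (Y r ω + O r ω) ≤ (M : ℝ) / T then F (Y r ω + O r ω) else 0) :=
    fun r => ⟨_, rfl⟩
  -- one-step representation
  have rep : ∀ k : ℕ, k < M → ∀ t', (k : ℝ) * δ < t' → t' ≤ ((k : ℝ) + 1) * δ →
      Y t' ω = S ((k : ℝ) * δ) t'
        (ι (Y ((k : ℝ) * δ) ω) + (t' - (k : ℝ) * δ) •
          (if Vm (Y ((k : ℝ) * δ) ω + O ((k : ℝ) * δ) ω) ≤ (M : ℝ) / T
            then F (Y ((k : ℝ) * δ) ω + O ((k : ℝ) * δ) ω) else 0)) := by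
    intro k hk t' h1 h2
    have hkM : (k : ℝ) + 1 ≤ (M : ℝ) := by exact_mod_cast hk
    have ht'T : t' ≤ T := by
      calc t' ≤ ((k : ℝ) + 1) * δ := h2
        _ ≤ (M : ℝ) * δ := by
          apply mul_le_mul_of_nonneg_right hkM hδ.le
        _ = T := hMδ
    have ha0 : (0 : ℝ) ≤ (k : ℝ) * δ := by positivity
    have ht'0 : 0 < t' := lt_of_le_of_lt ha0 h1
    have hIt' := hYint ω t' ht'0 ht'T
    rcases Nat.eq_zero_or_pos k with hk0 | hk1
    · subst hk0
      simp only [Nat.cast_zero, zero_mul, sub_zero] at h1 h2 ⊢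
      rw [hYeq ω t' ht'0 ht'T]
      have hconst : ∫ s in Ioc (0 : ℝ) t',
          S (hfloor δ s) t'
            (if Vm (Y (hfloor δ s) ω + O (hfloor δ s) ω) ≤ (M : ℝ) / T
              then F (Y (hfloor δ s) ω + O (hfloor δ s) ω) else 0)
          = (t' - 0) • (S 0 t')
            (if Vm (Y 0 ω + O 0 ω) ≤ (M : ℝ) / T then F (Y 0 ω + O 0 ω) else 0) := by
        apply integral_step _ _ _ ht'0.le
        intro s hs
        have : hfloor δ s = (0 : ℝ) := by
          have := hfloor_eq hδ 0 (by simpa using hs.1.le)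
            (by push_cast; simpa using lt_of_lt_of_le hs.2 h2)
          simpa using this
        rw [this]
      rw [hconst]
      rw [sub_zero, map_add, ContinuousLinearMap.map_smul]
    · -- k ≥ 1
      have h0a : (0 : ℝ) < (k : ℝ) * δ := by
        have : (0 : ℝ) < (k : ℝ) := by exact_mod_cast hk1
        positivity
      have haT : (k : ℝ) * δ ≤ T := by
        calc (k : ℝ) * δ ≤ (M : ℝ) * δ := by
              apply mul_le_mul_of_nonneg_right _ hδ.le
              exact_mod_cast hk.le
          _ = T := hMδ
      have hIa := hYint ω ((k : ℝ) * δ) h0a haT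
      have hsplit := integral_split _ 0 ((k : ℝ) * δ) t' h0a.le h1.le hIt'
      have hlast : ∫ s in Ioc ((k : ℝ) * δ) t',
          S (hfloor δ s) t'
            (if Vm (Y (hfloor δ s) ω + O (hfloor δ s) ω) ≤ (M : ℝ) / T
              then F (Y (hfloor δ s) ω + O (hfloor δ s) ω) else 0)
          = (t' - (k : ℝ) * δ) • (S ((k : ℝ) * δ) t')
            (if Vm (Y ((k : ℝ) * δ) ω + O ((k : ℝ) * δ) ω) ≤ (M : ℝ) / T
              then F (Y ((k : ℝ) * δ) ω + O ((k : ℝ) * δ) ω) else 0) := by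
        apply integral_step _ _ _ h1.le
        intro s hs
        rw [hfloor_eq hδ k hs.1.le (lt_of_lt_of_le hs.2 h2)]
      have hfirst : ∫ s in Ioc (0 : ℝ) ((k : ℝ) * δ),
          S (hfloor δ s) t'
            (if Vm (Y (hfloor δ s) ω + O (hfloor δ s) ω) ≤ (M : ℝ) / T
              then F (Y (hfloor δ s) ω + O (hfloor δ s) ω) else 0)
          = ((S ((k : ℝ) * δ) t').comp ι)
            (∫ s in Ioc (0 : ℝ) ((k : ℝ) * δ),
              S (hfloor δ s) ((k : ℝ) * δ)
                (if Vm (Y (hfloor δ s) ω + O (hfloor δ s) ω) ≤ (M : ℝ) / T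
                  then F (Y (hfloor δ s) ω + O (hfloor δ s) ω) else 0)) := by
        apply integral_map_congr _ _ _ _ _ hIa
        intro s hs
        have hf0 : 0 ≤ hfloor δ s := hfloor_nonneg hδ hs.1.le
        have hfa : hfloor δ s < (k : ℝ) * δ := lt_of_le_of_lt (hfloor_le hδ s) hs.2
        rw [hSsemi (hfloor δ s) ((k : ℝ) * δ) t' hf0 hfa h1 ht'T]
        rfl
      rw [hYeq ω t' ht'0 ht'T, hsplit, hlast, hfirst,
        hSsemi 0 ((k : ℝ) * δ) t' le_rfl h0a h1 ht'T,
        hYeq ω ((k : ℝ) * δ) h0a haT]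
      simp only [ContinuousLinearMap.coe_comp', Function.comp_apply, map_add, ContinuousLinearMap.map_smul]
      abel
  -- one-step Lyapunov estimate
  have step : ∀ k : ℕ, k < M → ∀ t', (k : ℝ) * δ < t' → t' ≤ ((k : ℝ) + 1) * δ →
      U (Y t' ω) ≤ Real.exp (c * (t' - (k : ℝ) * δ)) *
        (U (Y ((k : ℝ) * δ) ω) + (t' - (k : ℝ) * δ) * R (O ((k : ℝ) * δ) ω)) := by
    intro k hk t' h1 h2
    rw [rep k hk t' h1 h2]
    have h1' : (k : ℝ) * T / M < t' := by rw [mul_div_assoc]; exact h1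
    have h2' : t' ≤ ((k : ℝ) + 1) * T / M := by rw [mul_div_assoc]; exact h2
    have := hLyap (Y ((k : ℝ) * δ) ω) (O ((k : ℝ) * δ) ω) k hk t' h1' h2'
    rw [mul_div_assoc] at this
    exact this
  -- the main induction : Lemma 2.1
  have main : ∀ k : ℕ, ∀ t', 0 ≤ t' → t' ≤ (k : ℝ) * δ → t' ≤ T →
      IntegrableOn (fun s => R (O (hfloor δ s) ω)) (Set.Ioc 0 t') →
      U (Y t' ω) ≤ Real.exp (c * t') *
        (U (Y 0 ω) + ∫ s in Set.Ioc (0 : ℝ) t', R (O (hfloor δ s) ω)) := by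
    intro k
    induction k with
    | zero =>
      intro t' h0 h1 _ _
      simp only [Nat.cast_zero, zero_mul] at h1
      have : t' = 0 := le_antisymm h1 h0
      subst this
      simp only [Ioc_self, Measure.restrict_empty, integral_zero_measure, mul_zero,
        Real.exp_zero, add_zero, one_mul, le_refl]
    | succ k ih =>
      intro t' h0 h1 hT' hint
      rcases le_or_gt t' ((k : ℝ) * δ) with hle | hgt
      · exact ih t' h0 hle hT' hint
      · have hk1 : t' ≤ ((k : ℝ) + 1) * δ := by push_cast at h1; linarith
        have hkM : k < M := by
          have hx : (k : ℝ) * δ < (M : ℝ) * δ := lt_of_lt_of_le hgt (hT'.trans hMδ.symm.le)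
          have := lt_of_mul_lt_mul_right hx hδ.le
          exact_mod_cast this
        have ha0 : (0 : ℝ) ≤ (k : ℝ) * δ := by positivity
        have hstep := step k hkM t' hgt hk1
        have hIa : IntegrableOn (fun s => R (O (hfloor δ s) ω)) (Set.Ioc 0 ((k : ℝ) * δ)) :=
          hint.mono_set (Ioc_subset_Ioc_right hgt.le)
        have hYa := ih ((k : ℝ) * δ) ha0 le_rfl (hgt.le.trans hT') hIa
        have hIat : ∫ s in Ioc ((k : ℝ) * δ) t', R (O (hfloor δ s) ω)
            = (t' - (k : ℝ) * δ) * R (O ((k : ℝ) * δ) ω) := by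
          have := integral_step (fun s => R (O (hfloor δ s) ω)) ((k : ℝ) * δ) t' hgt.le
            (R (O ((k : ℝ) * δ) ω)) ?_
          · simpa [smul_eq_mul] using this
          · intro s hs
            simp only [hfloor_eq hδ k hs.1.le (lt_of_lt_of_le hs.2 hk1)]
        have hsplit := integral_split (fun s => R (O (hfloor δ s) ω)) 0 ((k : ℝ) * δ) t'
          ha0 hgt.le hint
        set I1 : ℝ := ∫ s in Set.Ioc (0 : ℝ) ((k : ℝ) * δ), R (O (hfloor δ s) ω) with hI1def
        have hI1 : 0 ≤ I1 := setIntegral_nonneg measurableSet_Ioc (fun s _ => hR0 _)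
        set J : ℝ := (t' - (k : ℝ) * δ) * R (O ((k : ℝ) * δ) ω) with hJdef
        have hJ : 0 ≤ J := mul_nonneg (by linarith) (hR0 _)
        have hX : 0 ≤ U (Y 0 ω) + I1 := add_nonneg (hU0 _) hI1
        have e1 : Real.exp (c * (t' - (k : ℝ) * δ)) * Real.exp (c * ((k : ℝ) * δ))
            = Real.exp (c * t') := by rw [← Real.exp_add]; ring_nf
        have e2 : Real.exp (c * (t' - (k : ℝ) * δ)) ≤ Real.exp (c * t') := by
          apply Real.exp_le_exp.mpr
          have : 0 ≤ c * ((k : ℝ) * δ) := mul_nonneg hc ha0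
          nlinarith
        calc U (Y t' ω) ≤ Real.exp (c * (t' - (k : ℝ) * δ)) * (U (Y ((k : ℝ) * δ) ω) + J) :=
              hstep
          _ ≤ Real.exp (c * (t' - (k : ℝ) * δ)) *
              (Real.exp (c * ((k : ℝ) * δ)) * (U (Y 0 ω) + I1) + J) := by
              apply mul_le_mul_of_nonneg_left _ (Real.exp_nonneg _)
              exact add_le_add_left hYa _
          _ ≤ Real.exp (c * t') * (U (Y 0 ω) + (I1 + J)) := by
              have e3 : Real.exp (c * (t' - (k : ℝ) * δ)) * Real.exp (c * ((k : ℝ) * δ)) *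
                  (U (Y 0 ω) + I1) = Real.exp (c * t') * (U (Y 0 ω) + I1) := by rw [e1]
              nlinarith [mul_le_mul_of_nonneg_right e2 hJ]
          _ = Real.exp (c * t') *
              (U (Y 0 ω) + ∫ s in Set.Ioc (0 : ℝ) t', R (O (hfloor δ s) ω)) := by
              rw [hsplit, hIat]
  -- assemble
  have htMδ : t ≤ (M : ℝ) * δ := by rw [hMδ]; exact htT
  have hUb := main M t ht0 htMδ htT hRint
  set I : ℝ := ∫ s in Set.Ioc (0 : ℝ) t, R (O (hfloor δ s) ω) with hIdef
  have hI0 : 0 ≤ I := setIntegral_nonneg measurableSet_Ioc (fun s _ => hR0 _)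
  have hkey : U (Y t ω) ^ q ≤
      2 ^ max (q - 1) 0 * Real.exp (c * q * t) * (U (Y 0 ω) ^ q + I ^ q) := by
    calc U (Y t ω) ^ q ≤ (Real.exp (c * t) * (U (Y 0 ω) + I)) ^ q :=
          Real.rpow_le_rpow (hU0 _) hUb hq.le
      _ = Real.exp (c * t) ^ q * (U (Y 0 ω) + I) ^ q :=
          Real.mul_rpow (Real.exp_nonneg _) (add_nonneg (hU0 _) hI0)
      _ ≤ Real.exp (c * t) ^ q * (2 ^ max (q - 1) 0 * (U (Y 0 ω) ^ q + I ^ q)) := by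
          apply mul_le_mul_of_nonneg_left (two_rpow_bound hq (hU0 _) hI0)
          exact Real.rpow_nonneg (Real.exp_nonneg _) q
      _ = 2 ^ max (q - 1) 0 * Real.exp (c * q * t) * (U (Y 0 ω) ^ q + I ^ q) := by
          rw [← Real.exp_mul]
          ring_nf
  calc ‖F (Y t ω + O t ω)‖ ≤ C * (1 + U (Y t ω) ^ q + U (O t ω) ^ q) := hFgrowth _ _
    _ ≤ C * (1 + 2 ^ max (q - 1) 0 * Real.exp (c * q * t) * (U (Y 0 ω) ^ q + I ^ q) +
        U (O t ω) ^ q) := by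
        apply mul_le_mul_of_nonneg_left _ hC
        exact add_le_add_left (add_le_add_right hkey _) _
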